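/- arXiv:1807.09735 — 4 statements merged into one kernel-verified Lean document; each statement's English description precedes it below -/
import Mathlib

section
/- Let ℓ be a Sperner-admissible labeling of Δ_{k,n}, i.e., ℓ(x) ∈ Support(x) for all x ∈ Δ_{k,n}. Then the number of monochromatic hyperedges of H_{k,n} (hyperedges all of whose vertices receive the same label) is at most C(n+k-3, k-1), and hence the number of non-monochromatic hyperedges is at least C(n+k-3, k-2). -/
open scoped BigOperators

/-- The discretized simplex `Δ_{k,n}`: points with nonnegative coordinates that are
integer multiples of `1/n` summing to `1`. -/
def disimplex (k n : ℕ) : Set (Fin k → ℚ) :=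
  {x | (∀ i, 0 ≤ x i) ∧ (∀ i, ∃ m : ℤ, (n : ℚ) * x i = (m : ℚ)) ∧ ∑ i, x i = 1}

/-- The `i`-th standard unit vector in `ℚ^k`. -/
def stdVec (k : ℕ) (i : Fin k) : Fin k → ℚ := fun j => if j = i then 1 else 0

/-- The hyperedge of `H_{k,n}` indexed by a point `z` of `Δ_{k,n-1}`. -/
def hyperedge (k n : ℕ) (z : Fin k → ℚ) : Set (Fin k → ℚ) :=
  {y | ∃ i : Fin k, y = fun j => (((n : ℚ) - 1) / n) * z j + (1 / n) * stdVec k i j}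

/-- The set of hyperedges of the hypergraph `H_{k,n}`. -/
def hyperedges (k n : ℕ) : Set (Set (Fin k → ℚ)) :=
  (hyperedge k n) '' (disimplex k (n - 1))

/-! ### Auxiliary counting lemmas -/

lemma MV.count_smul_singleton {k : ℕ} (g : Fin k → ℕ) (j : Fin k) :
    Multiset.count j (∑ i, g i • ({i} : Multiset (Fin k))) = g j := by
  rw [Multiset.count_sum']
  simp [Multiset.count_singleton]

lemma MV.card_smul_singleton {k : ℕ} (g : Fin k → ℕ) :
    Multiset.card (∑ i, g i • ({i} : Multiset (Fin k))) = ∑ i, g i := by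
  rw [← Multiset.sum_count_eq_card (fun a _ => Finset.mem_univ a)]
  simp [MV.count_smul_singleton]

noncomputable def MV.symEquiv (k m : ℕ) : Sym (Fin k) m ≃ {f : Fin k → ℕ // ∑ i, f i = m} where
  toFun s := ⟨fun i => Multiset.count i s.1, by
    rw [Multiset.sum_count_eq_card (fun a _ => Finset.mem_univ a), s.2]⟩
  invFun f := ⟨∑ i, (f.1 i) • ({i} : Multiset (Fin k)), by rw [MV.card_smul_singleton, f.2]⟩
  left_inv s := by
    apply Subtype.ext
    apply Multiset.ext.2
    intro j
    exact MV.count_smul_singleton _ j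
  right_inv f := by
    apply Subtype.ext
    funext j
    exact MV.count_smul_singleton _ j

theorem MV.card_sumfix (k m : ℕ) (hk : 1 ≤ k) :
    Nat.card {f : Fin k → ℕ // ∑ i, f i = m} = (m + k - 1).choose (k - 1) := by
  rw [Nat.card_congr (MV.symEquiv k m).symm, Nat.card_eq_fintype_card, Sym.card_sym_eq_choose]
  rw [Fintype.card_fin]
  rw [show k + m - 1 = m + k - 1 by omega]
  rw [← Nat.choose_symm (show k - 1 ≤ m + k - 1 by omega),
    show m + k - 1 - (k - 1) = m by omega]

lemma MV.finite_sumfix (k m : ℕ) : {f : Fin k → ℕ | ∑ i, f i = m}.Finite := by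
  rw [← Set.finite_coe_iff]
  exact Finite.of_equiv _ (MV.symEquiv k m)

lemma MV.ncard_sumfix (k m : ℕ) (hk : 1 ≤ k) :
    {f : Fin k → ℕ | ∑ i, f i = m}.ncard = (m + k - 1).choose (k - 1) := by
  rw [← Nat.card_coe_set_eq]
  exact MV.card_sumfix k m hk

/-! ### The natural-number representation of simplex points -/

noncomputable def MV.rep {k : ℕ} (m : ℕ) (z : Fin k → ℚ) : Fin k → ℕ :=
  fun i => ((m : ℚ) * z i).num.toNat

lemma MV.rep_cast {k m : ℕ} {z : Fin k → ℚ} (hz : z ∈ disimplex k m) (i : Fin k) :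
    ((MV.rep m z i : ℕ) : ℚ) = (m : ℚ) * z i := by
  obtain ⟨a, ha⟩ := hz.2.1 i
  have ha' : 0 ≤ a := by
    have h0 : (0:ℚ) ≤ (a:ℚ) := by
      rw [← ha]; exact mul_nonneg (by positivity) (hz.1 i)
    exact_mod_cast h0
  have hcast : ((a.toNat : ℕ) : ℚ) = (a : ℚ) := by exact_mod_cast Int.toNat_of_nonneg ha'
  simp only [MV.rep, ha, Rat.num_intCast, hcast]

lemma MV.rep_sum {k m : ℕ} {z : Fin k → ℚ} (hz : z ∈ disimplex k m) :
    ∑ i, MV.rep m z i = m := by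
  have : ((∑ i, MV.rep m z i : ℕ) : ℚ) = (m : ℚ) := by
    push_cast
    rw [Finset.sum_congr rfl (fun i _ => MV.rep_cast hz i), ← Finset.mul_sum, hz.2.2, mul_one]
  exact_mod_cast this

lemma MV.rep_injOn {k m : ℕ} (hm : 1 ≤ m) : Set.InjOn (MV.rep m) (disimplex k m) := by
  intro z hz z' hz' h
  funext i
  have h1 := MV.rep_cast hz i
  have h2 := MV.rep_cast hz' i
  rw [h] at h1
  have hm' : ((m:ℚ)) ≠ 0 := by positivity
  exact mul_left_cancel₀ hm' (h1.symm.trans h2)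

lemma MV.rep_image {k m : ℕ} (hm : 1 ≤ m) :
    MV.rep m '' (disimplex k m) = {f : Fin k → ℕ | ∑ i, f i = m} := by
  apply Set.Subset.antisymm
  · rintro _ ⟨z, hz, rfl⟩
    exact MV.rep_sum hz
  · rintro f hf
    have hm' : ((m:ℚ)) ≠ 0 := by positivity
    refine ⟨fun i => (f i : ℚ) / m, ⟨fun i => by positivity, fun i => ⟨f i, by field_simp; norm_cast⟩, ?_⟩, ?_⟩
    · rw [← Finset.sum_div]
      rw [show ∑ i, ((f i : ℚ)) = ((∑ i, f i : ℕ) : ℚ) by push_cast; rfl, hf]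
      field_simp
    · funext i
      have : (m : ℚ) * ((f i : ℚ) / m) = ((f i : ℤ) : ℚ) := by field_simp; norm_cast
      rw [MV.rep, this, Rat.num_intCast]
      simp

lemma MV.finite_disimplex {k m : ℕ} (hm : 1 ≤ m) : (disimplex k m).Finite := by
  apply Set.Finite.of_finite_image ?_ (MV.rep_injOn hm)
  rw [MV.rep_image hm]
  exact MV.finite_sumfix k m

lemma MV.ncard_disimplex {k m : ℕ} (hm : 1 ≤ m) (hk : 1 ≤ k) :
    (disimplex k m).ncard = (m + k - 1).choose (k - 1) := by
  rw [← Set.ncard_image_of_injOn (MV.rep_injOn hm), MV.rep_image hm]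
  exact MV.ncard_sumfix k m hk

/-! ### Vertices of hyperedges -/

def MV.vert (k n : ℕ) (z : Fin k → ℚ) (i : Fin k) : Fin k → ℚ :=
  fun j => (((n : ℚ) - 1) / n) * z j + (1 / n) * stdVec k i j

lemma MV.vert_mem_hyperedge {k n : ℕ} (z : Fin k → ℚ) (i : Fin k) :
    MV.vert k n z i ∈ hyperedge k n z := ⟨i, rfl⟩

lemma MV.mem_hyperedge {k n : ℕ} {z : Fin k → ℚ} {y : Fin k → ℚ} :
    y ∈ hyperedge k n z ↔ ∃ i, y = MV.vert k n z i := Iff.rfl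

lemma MV.sum_stdVec {k : ℕ} (i : Fin k) : ∑ j, stdVec k i j = 1 := by
  simp [stdVec]

lemma MV.vert_mem {k n : ℕ} (hn : 1 ≤ n) {z : Fin k → ℚ} (hz : z ∈ disimplex k (n-1))
    (i : Fin k) : MV.vert k n z i ∈ disimplex k n := by
  have hn1 : (1:ℚ) ≤ (n:ℚ) := by exact_mod_cast hn
  have hnpos : (0:ℚ) < (n:ℚ) := by linarith
  have hn0 : ((n:ℚ)) ≠ 0 := ne_of_gt hnpos
  have hcast : (((n-1:ℕ)) : ℚ) = (n:ℚ) - 1 := by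
    push_cast [Nat.cast_sub hn]; ring
  refine ⟨fun j => ?_, fun j => ?_, ?_⟩
  · have h1 : 0 ≤ ((n:ℚ) - 1) / n := div_nonneg (by linarith) (by linarith)
    have h2 : (0:ℚ) ≤ stdVec k i j := by
      simp only [stdVec]; split <;> norm_num
    have h3 := hz.1 j
    have := mul_nonneg h1 h3
    have := mul_nonneg (by positivity : (0:ℚ) ≤ 1/(n:ℚ)) h2
    simp only [MV.vert]
    linarith
  · obtain ⟨a, ha⟩ := hz.2.1 j
    rw [hcast] at ha
    refine ⟨a + (if j = i then 1 else 0), ?_⟩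
    have hstep : (n:ℚ) * (((n:ℚ)-1)/n * z j + 1/n * stdVec k i j)
        = ((n:ℚ)-1) * z j + stdVec k i j := by field_simp
    simp only [MV.vert]
    rw [hstep, ha]
    push_cast
    simp [stdVec]
  · simp only [MV.vert]
    rw [Finset.sum_add_distrib, ← Finset.mul_sum, ← Finset.mul_sum, hz.2.2, MV.sum_stdVec]
    field_simp
    ring

/-! ### Injectivity of the hyperedge map -/

lemma MV.coord_eq {k n : ℕ} (hn : 1 ≤ n) {z z' : Fin k → ℚ} {i i' : Fin k}
    (h : MV.vert k n z i = MV.vert k n z' i') (t : Fin k) :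
    ((n:ℚ) - 1) * z t + stdVec k i t = ((n:ℚ) - 1) * z' t + stdVec k i' t := by
  have hn0 : ((n:ℚ)) ≠ 0 := by
    have : (0:ℚ) < (n:ℚ) := by exact_mod_cast Nat.pos_of_ne_zero (by omega)
    exact ne_of_gt this
  have := congrFun h t
  simp only [MV.vert] at this
  field_simp at this
  linarith

lemma MV.hyperedge_injOn {k n : ℕ} (hk : 2 ≤ k) (hn : 2 ≤ n) :
    Set.InjOn (hyperedge k n) (disimplex k (n-1)) := by
  intro z hz z' hz' h
  have hn1 : (1:ℚ) < (n:ℚ) := by exact_mod_cast hn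
  set i0 : Fin k := ⟨0, by omega⟩
  set i1 : Fin k := ⟨1, by omega⟩
  have hii : i0 ≠ i1 := by simp [i0, i1, Fin.ext_iff]
  obtain ⟨j0, hj0⟩ := MV.mem_hyperedge.1 (h ▸ MV.vert_mem_hyperedge (n := n) z i0)
  obtain ⟨j1, hj1⟩ := MV.mem_hyperedge.1 (h ▸ MV.vert_mem_hyperedge (n := n) z i1)
  have k0 := fun t => MV.coord_eq (by omega) hj0 t
  have k1 := fun t => MV.coord_eq (by omega) hj1 t
  by_cases hji : j0 = i0
  · subst hji
    funext t
    have := k0 t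
    have hne : ((n:ℚ) - 1) ≠ 0 := by linarith
    have : ((n:ℚ) - 1) * z t = ((n:ℚ) - 1) * z' t := by linarith
    exact mul_left_cancel₀ hne this
  · exfalso
    have e0 := k0 i0
    have e1 := k1 i0
    have s1 : stdVec k i0 i0 = 1 := by simp [stdVec]
    have s2 : stdVec k i1 i0 = 0 := by
      simp only [stdVec]; exact if_neg hii
    have s3 : stdVec k j0 i0 = 0 := by
      simp only [stdVec]; exact if_neg (fun h => hji h.symm)
    have s4a : (0:ℚ) ≤ stdVec k j1 i0 := by
      simp only [stdVec]; split <;> norm_num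
    have s4b : stdVec k j1 i0 ≤ 1 := by
      simp only [stdVec]; split <;> norm_num
    rw [s1, s3] at e0
    rw [s2] at e1
    linarith

lemma MV.mono_pos {k n : ℕ} (hk : 2 ≤ k) (hn : 2 ≤ n) (ℓ : (Fin k → ℚ) → Fin k)
    (hadm : ∀ x ∈ disimplex k n, 0 < x (ℓ x)) {z : Fin k → ℚ}
    (hz : z ∈ disimplex k (n-1)) {c : Fin k}
    (hc : ∀ x ∈ hyperedge k n z, ℓ x = c) : 0 < z c := by
  set i0 : Fin k := ⟨0, by omega⟩ with hid0
  set i1 : Fin k := ⟨1, by omega⟩ with hid1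
  set i := if c = i0 then i1 else i0 with hi
  have hic : i ≠ c := by
    rcases eq_or_ne c i0 with h | h
    · rw [hi, if_pos h, h]
      simp [hid0, hid1, Fin.ext_iff]
    · rw [hi, if_neg h]
      exact fun hh => h hh.symm
  have hv := MV.vert_mem (n := n) (by omega) hz i
  have hl : ℓ (MV.vert k n z i) = c := hc _ (MV.vert_mem_hyperedge z i)
  have hp := hadm _ hv
  rw [hl] at hp
  have hstd : stdVec k i c = 0 := by
    simp only [stdVec]; exact if_neg (fun h => hic h.symm)
  simp only [MV.vert, hstd, mul_zero, add_zero] at hp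
  have h2 : (2:ℚ) ≤ (n:ℚ) := by exact_mod_cast hn
  have hfrac : (0:ℚ) < ((n:ℚ)-1)/n := by
    apply div_pos <;> linarith
  nlinarith [hz.1 c]

lemma MV.rep_pos {k n : ℕ} (hk : 2 ≤ k) (hn : 2 ≤ n) (ℓ : (Fin k → ℚ) → Fin k)
    (hadm : ∀ x ∈ disimplex k n, 0 < x (ℓ x)) {z : Fin k → ℚ}
    (hz : z ∈ disimplex k (n-1)) {c : Fin k}
    (hc : ∀ x ∈ hyperedge k n z, ℓ x = c) : 1 ≤ MV.rep (n-1) z c := by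
  have hpos := MV.mono_pos hk hn ℓ hadm hz hc
  have hq : (0:ℚ) < ((n-1:ℕ):ℚ) * z c := by
    apply mul_pos ?_ hpos
    exact_mod_cast Nat.pos_of_ne_zero (by omega)
  rw [← MV.rep_cast hz c] at hq
  have : 0 < MV.rep (n-1) z c := by exact_mod_cast hq
  omega

/-- Mirzakhani–Vondrák: for a Sperner-admissible labeling, the number of
monochromatic hyperedges of `H_{k,n}` is at most `C(n+k-3, k-1)`, hence the
number of non-monochromatic hyperedges is at least `C(n+k-3, k-2)`. -/
theorem stmt4 (k n : ℕ) (hk : 2 ≤ k) (hn : 1 ≤ n)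
    (ℓ : (Fin k → ℚ) → Fin k)
    (hadm : ∀ x ∈ disimplex k n, 0 < x (ℓ x)) :
    {e ∈ hyperedges k n | ∃ c, ∀ x ∈ e, ℓ x = c}.ncard ≤ (n + k - 3).choose (k - 1) ∧
      (n + k - 3).choose (k - 2) ≤
        {e ∈ hyperedges k n | ¬ ∃ c, ∀ x ∈ e, ℓ x = c}.ncard := by
  have hi0lt : 0 < k := by omega
  have hi1lt : 1 < k := by omega
  set i0 : Fin k := ⟨0, hi0lt⟩ with hid0
  set i1 : Fin k := ⟨1, hi1lt⟩ with hid1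
  have hii : i0 ≠ i1 := by simp [hid0, hid1, Fin.ext_iff]
  rcases eq_or_lt_of_le hn with h1 | hn2
  · -- n = 1
    subst h1
    have hU : ∀ z : Fin k → ℚ, hyperedge k 1 z = {y | ∃ i, y = stdVec k i} := by
      intro z
      ext y
      constructor
      · rintro ⟨i, rfl⟩; exact ⟨i, by funext j; norm_num⟩
      · rintro ⟨i, rfl⟩; exact ⟨i, by funext j; norm_num⟩
    have hmem0 : stdVec k i0 ∈ disimplex k (1 - 1) := by
      refine ⟨fun j => ?_, fun j => ⟨0, by norm_num⟩, ?_⟩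
      · simp only [stdVec]; split <;> norm_num
      · exact MV.sum_stdVec i0
    have hE : hyperedges k 1 = {{y | ∃ i, y = stdVec k i}} := by
      apply Set.Subset.antisymm
      · rintro e ⟨z, hz, rfl⟩
        exact hU z
      · rintro e he
        rw [Set.mem_singleton_iff] at he
        exact ⟨stdVec k i0, hmem0, by rw [hU, he]⟩
    have hstd1 : ∀ i : Fin k, stdVec k i ∈ disimplex k 1 := by
      intro i
      refine ⟨fun j => ?_, fun j => ⟨if j = i then 1 else 0, ?_⟩, MV.sum_stdVec i⟩
      · simp only [stdVec]; split <;> norm_num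
      · simp only [stdVec]; split <;> norm_num
    have hlab : ∀ i : Fin k, ℓ (stdVec k i) = i := by
      intro i
      have hp := hadm _ (hstd1 i)
      by_contra hne
      have h0 : stdVec k i (ℓ (stdVec k i)) = 0 := by
        simp only [stdVec]; exact if_neg hne
      rw [h0] at hp
      norm_num at hp
    have hnotmono : ¬ ∃ c, ∀ x ∈ {y | ∃ i, y = stdVec k i}, ℓ x = c := by
      rintro ⟨c, hc⟩
      have h0 := hc _ ⟨i0, rfl⟩
      have h1' := hc _ ⟨i1, rfl⟩
      rw [hlab] at h0 h1'
      exact hii (h0.trans h1'.symm)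
    constructor
    · have hMempty : {e ∈ hyperedges k 1 | ∃ c, ∀ x ∈ e, ℓ x = c} = ∅ := by
        rw [hE]
        apply Set.eq_empty_iff_forall_notMem.2
        rintro e ⟨he, hc⟩
        rw [Set.mem_singleton_iff] at he
        subst he
        exact hnotmono hc
      simp [hMempty]
    · have hNall : {e ∈ hyperedges k 1 | ¬ ∃ c, ∀ x ∈ e, ℓ x = c}
          = {{y | ∃ i, y = stdVec k i}} := by
        rw [hE]
        ext e
        simp only [Set.mem_sep_iff, Set.mem_singleton_iff]
        constructor
        · rintro ⟨he, _⟩; exact he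
        · rintro rfl; exact ⟨rfl, hnotmono⟩
      rw [hNall, Set.ncard_singleton, show 1 + k - 3 = k - 2 by omega, Nat.choose_self]
  · -- n ≥ 2
    have hn2' : 2 ≤ n := hn2
    have hm1 : 1 ≤ n - 1 := by omega
    have hΔfin : (disimplex k (n-1)).Finite := MV.finite_disimplex hm1
    have hEfin : (hyperedges k n).Finite := hΔfin.image _
    set M := {e ∈ hyperedges k n | ∃ c, ∀ x ∈ e, ℓ x = c} with hM
    set N := {e ∈ hyperedges k n | ¬ ∃ c, ∀ x ∈ e, ℓ x = c} with hN
    have hMfin : M.Finite := hEfin.subset (Set.sep_subset _ _)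
    have hNfin : N.Finite := hEfin.subset (Set.sep_subset _ _)
    set Z := {z ∈ disimplex k (n-1) | ∀ x ∈ hyperedge k n z, ℓ x = ℓ (MV.vert k n z i0)}
      with hZdef
    have hMZ : M = hyperedge k n '' Z := by
      apply Set.Subset.antisymm
      · rintro e ⟨⟨z, hz, rfl⟩, c, hc⟩
        refine ⟨z, ⟨hz, fun x hx => ?_⟩, rfl⟩
        rw [hc x hx, hc _ (MV.vert_mem_hyperedge z i0)]
      · rintro e ⟨z, ⟨hz, hmono⟩, rfl⟩
        exact ⟨⟨z, hz, rfl⟩, ℓ (MV.vert k n z i0), hmono⟩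
    have hinj := MV.hyperedge_injOn (k := k) (n := n) hk hn2'
    have hZsub : Z ⊆ disimplex k (n-1) := Set.sep_subset _ _
    have hMcard : M.ncard = Z.ncard := by
      rw [hMZ, Set.ncard_image_of_injOn (hinj.mono hZsub)]
    -- the injection φ
    have hcastn : (((n-1:ℕ)) : ℚ) = (n:ℚ) - 1 := by
      push_cast [Nat.cast_sub (by omega : 1 ≤ n)]; ring
    have hn0 : ((n:ℚ)) ≠ 0 := by
      have : (0:ℚ) < (n:ℚ) := by exact_mod_cast Nat.pos_of_ne_zero (by omega)
      exact ne_of_gt this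
    set φ : (Fin k → ℚ) → (Fin k → ℕ) :=
      fun z i => MV.rep (n-1) z i - (if i = ℓ (MV.vert k n z i0) then 1 else 0) with hφ
    have hrep1 : ∀ z ∈ Z, 1 ≤ MV.rep (n-1) z (ℓ (MV.vert k n z i0)) := by
      intro z hz
      exact MV.rep_pos hk hn2' ℓ hadm hz.1 hz.2
    have hφmem : ∀ z ∈ Z, φ z ∈ {f : Fin k → ℕ | ∑ i, f i = n - 2} := by
      intro z hz
      have hr := hrep1 z hz
      have hsum : ∑ i, MV.rep (n-1) z i = n - 1 := MV.rep_sum hz.1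
      have hdelta : ∑ i, (if i = ℓ (MV.vert k n z i0) then (1:ℕ) else 0) = 1 := by simp
      have hkey : ∑ i, φ z i + ∑ i, (if i = ℓ (MV.vert k n z i0) then (1:ℕ) else 0)
          = ∑ i, MV.rep (n-1) z i := by
        rw [← Finset.sum_add_distrib]
        apply Finset.sum_congr rfl
        intro i _
        simp only [hφ]
        have hb : (if i = ℓ (MV.vert k n z i0) then 1 else 0) ≤ MV.rep (n-1) z i := by
          split_ifs with h1
          · rw [h1]; exact hr
          · exact Nat.zero_le _
        omega
      show ∑ i, φ z i = n - 2
      omega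
    have hφinj : Set.InjOn φ Z := by
      intro z hz z' hz' heq
      have hr := hrep1 z hz
      have hr' := hrep1 z' hz'
      have hnat : ∀ i, MV.rep (n-1) z i + (if i = ℓ (MV.vert k n z' i0) then 1 else 0)
          = MV.rep (n-1) z' i + (if i = ℓ (MV.vert k n z i0) then 1 else 0) := by
        intro i
        have h := congrFun heq i
        simp only [hφ] at h
        have hb1 : (if i = ℓ (MV.vert k n z i0) then 1 else 0) ≤ MV.rep (n-1) z i := by
          split_ifs with h1
          · rw [h1]; exact hr
          · exact Nat.zero_le _
        have hb2 : (if i = ℓ (MV.vert k n z' i0) then 1 else 0) ≤ MV.rep (n-1) z' i := by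
          split_ifs with h1
          · rw [h1]; exact hr'
          · exact Nat.zero_le _
        omega
      have hQ : ∀ i, ((n:ℚ)-1) * z i + (if i = ℓ (MV.vert k n z' i0) then 1 else 0)
          = ((n:ℚ)-1) * z' i + (if i = ℓ (MV.vert k n z i0) then 1 else 0) := by
        intro i
        have h := hnat i
        have c1 := MV.rep_cast hz.1 i
        have c2 := MV.rep_cast hz'.1 i
        rw [hcastn] at c1 c2
        rw [← c1, ← c2]
        exact_mod_cast h
      have harr : ∀ a b : ℚ, ((n:ℚ)-1)/n * a + 1/n * b = (((n:ℚ)-1) * a + b)/n := by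
        intro a b; field_simp
      have hvv : MV.vert k n z (ℓ (MV.vert k n z' i0)) = MV.vert k n z' (ℓ (MV.vert k n z i0)) := by
        funext j
        simp only [MV.vert, stdVec]
        rw [harr, harr, hQ j]
      have hcc : ℓ (MV.vert k n z i0) = ℓ (MV.vert k n z' i0) := by
        have hlc := hz.2 _ (MV.vert_mem_hyperedge z (ℓ (MV.vert k n z' i0)))
        have hlc' := hz'.2 _ (MV.vert_mem_hyperedge z' (ℓ (MV.vert k n z i0)))
        rw [← hlc, hvv, hlc']
      funext j
      have h := hQ j
      rw [hcc] at h
      have h2 : (2:ℚ) ≤ (n:ℚ) := by exact_mod_cast hn2'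
      have hne : ((n:ℚ)-1) ≠ 0 := by linarith
      have heq' : ((n:ℚ)-1) * z j = ((n:ℚ)-1) * z' j := by linarith
      exact mul_left_cancel₀ hne heq'
    have hZcard : Z.ncard ≤ (n + k - 3).choose (k-1) := by
      have himg : φ '' Z ⊆ {f : Fin k → ℕ | ∑ i, f i = n-2} := by
        rintro _ ⟨z, hz, rfl⟩
        exact hφmem z hz
      calc Z.ncard = (φ '' Z).ncard := (Set.ncard_image_of_injOn hφinj).symm
        _ ≤ {f : Fin k → ℕ | ∑ i, f i = n-2}.ncard :=
            Set.ncard_le_ncard himg (MV.finite_sumfix k (n-2))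
        _ = ((n-2) + k - 1).choose (k-1) := MV.ncard_sumfix k (n-2) (by omega)
        _ = (n + k - 3).choose (k-1) := by rw [show (n-2) + k - 1 = n + k - 3 by omega]
    have hEcard : (hyperedges k n).ncard = (n + k - 2).choose (k - 1) := by
      rw [hyperedges, Set.ncard_image_of_injOn hinj, MV.ncard_disimplex hm1 (by omega)]
      rw [show (n-1) + k - 1 = n + k - 2 by omega]
    have hsplit : M.ncard + N.ncard = (hyperedges k n).ncard := by
      have hdisj : Disjoint M N := by
        rw [Set.disjoint_left]
        rintro e ⟨he, hc⟩ ⟨_, hnc⟩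
        exact hnc hc
      rw [← Set.ncard_union_eq hdisj hMfin hNfin]
      congr 1
      ext e
      simp only [hM, hN, Set.mem_union, Set.mem_sep_iff]
      tauto
    have pascal : (n + k - 2).choose (k-1) = (n+k-3).choose (k-2) + (n+k-3).choose (k-1) := by
      rw [show n + k - 2 = (n + k - 3) + 1 by omega, show k - 1 = (k-2) + 1 by omega,
        Nat.choose_succ_succ]
    have hMle : M.ncard ≤ (n + k - 3).choose (k-1) := by rw [hMcard]; exact hZcard
    exact ⟨hMle, by omega⟩
end

section
/- Every inadmissible monochromatic hyperedge of H_{k,n} (under a labeling whose only inadmissible labels are label k on the face x_k = 0) contains exactly k−1 vertices from the face x_k = 0, and all k−1 of these vertices have label k, i.e., lie in Z. -/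
open scoped BigOperators

/-- An inadmissible monochromatic hyperedge (under a labeling whose only
inadmissible labels are label `k` on the face `x_k = 0`) contains exactly `k-1`
vertices from the face `x_k = 0`, all of which carry label `k`, i.e. lie in `Z`. -/
theorem stmt7 (k n : ℕ) (hk : 2 ≤ k) (hn : 1 ≤ n)
    (ℓ : (Fin k → ℚ) → Fin k)
    (hface : ∀ x ∈ disimplex k n, ¬ 0 < x (ℓ x) →
      x ⟨k - 1, by omega⟩ = 0 ∧ ℓ x = ⟨k - 1, by omega⟩)
    (e : Set (Fin k → ℚ)) (he : e ∈ hyperedges k n)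
    (hmono : ∃ c, ∀ x ∈ e, ℓ x = c)
    (hinad : ∃ x ∈ e, ¬ 0 < x (ℓ x)) :
    {x ∈ e | x ⟨k - 1, by omega⟩ = 0}.ncard = k - 1 ∧
      ∀ x ∈ e, x ⟨k - 1, by omega⟩ = 0 → ℓ x = ⟨k - 1, by omega⟩ := by
  set K : Fin k := ⟨k - 1, by omega⟩ with hK
  obtain ⟨z, hz, rfl⟩ := he
  obtain ⟨hz1, hz2, hz3⟩ := hz
  have hn0 : (n : ℚ) ≠ 0 := by
    have : (1:ℚ) ≤ (n:ℚ) := by exact_mod_cast hn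
    linarith
  have hnpos : (0:ℚ) < (n:ℚ) := by
    have : (1:ℚ) ≤ (n:ℚ) := by exact_mod_cast hn
    linarith
  have hcast : ((n - 1 : ℕ) : ℚ) = (n : ℚ) - 1 := by
    push_cast [Nat.cast_sub hn]; ring
  set v : Fin k → (Fin k → ℚ) :=
    fun i j => (((n : ℚ) - 1) / n) * z j + (1 / n) * stdVec k i j with hv
  have hmemE : ∀ x, x ∈ hyperedge k n z ↔ ∃ i, x = v i := by
    intro x; rfl
  have hnneg : (0:ℚ) ≤ ((n:ℚ) - 1) / n := by
    apply div_nonneg _ (le_of_lt hnpos)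
    have : (1:ℚ) ≤ (n:ℚ) := by exact_mod_cast hn
    linarith
  have hstd_nonneg : ∀ i j, (0:ℚ) ≤ stdVec k i j := by
    intro i j; unfold stdVec; split <;> norm_num
  have hvmem : ∀ i, v i ∈ disimplex k n := by
    intro i
    refine ⟨?_, ?_, ?_⟩
    · intro j
      have := hz1 j
      have := hstd_nonneg i j
      have h1 : (0:ℚ) ≤ (1/n) := by positivity
      have : (0:ℚ) ≤ (((n : ℚ) - 1) / n) * z j := mul_nonneg hnneg (hz1 j)
      have : (0:ℚ) ≤ (1 / n) * stdVec k i j := mul_nonneg h1 (hstd_nonneg i j)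
      simp only [hv]
      linarith
    · intro j
      obtain ⟨m, hm⟩ := hz2 j
      rw [hcast] at hm
      refine ⟨m + (if j = i then 1 else 0 : ℤ), ?_⟩
      simp only [hv, stdVec]
      split <;> push_cast <;> field_simp <;> linarith [hm]
    · have hsum : ∑ j, stdVec k i j = 1 := by
        simp [stdVec]
      simp only [hv]
      rw [Finset.sum_add_distrib, ← Finset.mul_sum, ← Finset.mul_sum, hz3, hsum]
      field_simp
      ring
  obtain ⟨x0, hx0e, hx0⟩ := hinad
  obtain ⟨i0, rfl⟩ := (hmemE x0).1 hx0e
  obtain ⟨hzero, hlab⟩ := hface _ (hvmem i0) hx0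
  obtain ⟨c, hc⟩ := hmono
  have hcK : c = K := by
    have h1 : ℓ (v i0) = c := hc _ hx0e
    rw [← h1, hlab]
  -- the (k-1)-coordinate of z (scaled) vanishes
  have hA : (((n : ℚ) - 1) / n) * z K = 0 := by
    have hB : (0:ℚ) ≤ (1 / n) * stdVec k i0 K := by
      exact mul_nonneg (by positivity) (hstd_nonneg i0 K)
    have hA' : (0:ℚ) ≤ (((n : ℚ) - 1) / n) * z K := mul_nonneg hnneg (hz1 K)
    have : (((n : ℚ) - 1) / n) * z K + (1 / n) * stdVec k i0 K = 0 := hzero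
    linarith
  have hvK : ∀ j, v j K = 0 ↔ j ≠ K := by
    intro j
    simp only [hv, hA, zero_add, stdVec]
    constructor
    · intro h hj
      rw [if_pos hj.symm, mul_one] at h
      exact hn0 (by field_simp at h; simp at h)
    · intro hj
      rw [if_neg (fun h => hj h.symm)]
      ring
  have hinj : Function.Injective v := by
    intro a b hab
    by_contra hne
    have h := congrFun hab a
    simp only [hv, stdVec, if_pos rfl, if_neg (fun hh : a = b => hne hh)] at h
    norm_num at h
    have h1 : (1:ℚ)/n = 0 := by linarith
    rw [div_eq_zero_iff] at h1
    simp [hn0] at h1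
  have hSet : {x ∈ hyperedge k n z | x K = 0} = v '' {j | j ≠ K} := by
    ext x
    constructor
    · rintro ⟨hxe, hxK⟩
      obtain ⟨j, rfl⟩ := (hmemE x).1 hxe
      exact ⟨j, (hvK j).1 hxK, rfl⟩
    · rintro ⟨j, hj, rfl⟩
      exact ⟨(hmemE _).2 ⟨j, rfl⟩, (hvK j).2 hj⟩
  constructor
  · rw [hSet, Set.ncard_image_of_injective _ hinj]
    have : {j : Fin k | j ≠ K} = (({K}ᶜ : Finset (Fin k)) : Set (Fin k)) := by
      ext j; simp
    rw [this, Set.ncard_coe_finset, Finset.card_compl, Finset.card_singleton,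
      Fintype.card_fin]
  · intro x hxe _
    rw [hc x hxe, hcK]
end

section
/- In the graph on Δ_{4,n} with edges {xy : ‖x−y‖₁ = 2/n}, every hyperedge e of H_{4,n} induces a complete subgraph on its 4 vertices (6 edges), and the edge sets induced by distinct hyperedges are pairwise disjoint. -/
open scoped BigOperators

/-- The unordered pairs of distinct vertices of a hyperedge. -/
def inducedPairs (e : Set (Fin 4 → ℚ)) : Set (Set (Fin 4 → ℚ)) :=
  {p | ∃ x y, x ∈ e ∧ y ∈ e ∧ x ≠ y ∧ p = {x, y}}

def vtx (n : ℕ) (z : Fin 4 → ℚ) (i : Fin 4) : Fin 4 → ℚ :=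
  fun j => (((n : ℚ) - 1) / n) * z j + (1 / n) * stdVec 4 i j

lemma hyperedge_eq (n : ℕ) (z : Fin 4 → ℚ) : hyperedge 4 n z = Set.range (vtx n z) := by
  ext y; exact ⟨fun ⟨i, h⟩ => ⟨i, h.symm⟩, fun ⟨i, h⟩ => ⟨i, h.symm⟩⟩

lemma vtx_inj {n : ℕ} (hn : (n:ℚ) ≠ 0) (z : Fin 4 → ℚ) : Function.Injective (vtx n z) := by
  intro a b h
  by_contra hab
  have h2 := congrFun h a
  simp only [vtx, stdVec, if_pos rfl] at h2
  rw [if_neg hab] at h2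
  simp at h2
  exact hn (by exact_mod_cast h2)

lemma vtx_dist {n : ℕ} (hn : 1 ≤ n) (z : Fin 4 → ℚ) {i j : Fin 4} (hij : i ≠ j) :
    ∑ k, |vtx n z i k - vtx n z j k| = 2 / n := by
  have hd : ∀ k, vtx n z i k - vtx n z j k = (1/n) * (stdVec 4 i k - stdVec 4 j k) := by
    intro k; simp [vtx]; ring
  simp only [Fin.sum_univ_four, hd]
  fin_cases i <;> fin_cases j <;> simp_all [stdVec] <;>
    ring

lemma pair_ne {α : Type*} {v : Fin 4 → α} (hv : Function.Injective v) {i j k l : Fin 4}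
    (h : i ≠ k ∧ i ≠ l ∨ j ≠ k ∧ j ≠ l) : ({v i, v j} : Set α) ≠ {v k, v l} := by
  intro he
  rcases h with ⟨h1, h2⟩ | ⟨h1, h2⟩
  · have hm : v i ∈ ({v k, v l} : Set α) := by rw [← he]; simp
    simp only [Set.mem_insert_iff, Set.mem_singleton_iff] at hm
    rcases hm with h | h
    exacts [h1 (hv h), h2 (hv h)]
  · have hm : v j ∈ ({v k, v l} : Set α) := by rw [← he]; simp
    simp only [Set.mem_insert_iff, Set.mem_singleton_iff] at hm
    rcases hm with h | h
    exacts [h1 (hv h), h2 (hv h)]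

lemma inducedPairs_range (v : Fin 4 → (Fin 4 → ℚ)) (hv : Function.Injective v) :
    inducedPairs (Set.range v) =
      {{v 0, v 1}, {v 0, v 2}, {v 0, v 3}, {v 1, v 2}, {v 1, v 3}, {v 2, v 3}} := by
  ext p
  constructor
  · rintro ⟨x, y, ⟨i, rfl⟩, ⟨j, rfl⟩, hxy, rfl⟩
    have hij : i ≠ j := fun h => hxy (by rw [h])
    fin_cases i <;> fin_cases j <;>
      first
        | exact absurd rfl hij
        | (simp; done)
        | (apply Set.mem_of_eq_of_mem (Set.pair_comm _ _); simp)
  · intro hp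
    simp only [Set.mem_insert_iff, Set.mem_singleton_iff] at hp
    rcases hp with rfl | rfl | rfl | rfl | rfl | rfl
    exacts [⟨v 0, v 1, ⟨0, rfl⟩, ⟨1, rfl⟩, hv.ne (by decide), rfl⟩,
      ⟨v 0, v 2, ⟨0, rfl⟩, ⟨2, rfl⟩, hv.ne (by decide), rfl⟩,
      ⟨v 0, v 3, ⟨0, rfl⟩, ⟨3, rfl⟩, hv.ne (by decide), rfl⟩,
      ⟨v 1, v 2, ⟨1, rfl⟩, ⟨2, rfl⟩, hv.ne (by decide), rfl⟩,
      ⟨v 1, v 3, ⟨1, rfl⟩, ⟨3, rfl⟩, hv.ne (by decide), rfl⟩,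
      ⟨v 2, v 3, ⟨2, rfl⟩, ⟨3, rfl⟩, hv.ne (by decide), rfl⟩]

lemma ncard_pairs (v : Fin 4 → (Fin 4 → ℚ)) (hv : Function.Injective v) :
    ({{v 0, v 1}, {v 0, v 2}, {v 0, v 3}, {v 1, v 2}, {v 1, v 3}, {v 2, v 3}} :
      Set (Set (Fin 4 → ℚ))).ncard = 6 := by
  have N : ∀ {i j k l : Fin 4}, (i ≠ k ∧ i ≠ l ∨ j ≠ k ∧ j ≠ l) →
      ({v i, v j} : Set (Fin 4 → ℚ)) ≠ {v k, v l} := fun h => pair_ne hv h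
  rw [Set.ncard_insert_of_notMem (by
        simp only [Set.mem_insert_iff, Set.mem_singleton_iff]; push_neg
        exact ⟨N (by decide), N (by decide), N (by decide), N (by decide), N (by decide)⟩),
      Set.ncard_insert_of_notMem (by
        simp only [Set.mem_insert_iff, Set.mem_singleton_iff]; push_neg
        exact ⟨N (by decide), N (by decide), N (by decide), N (by decide)⟩),
      Set.ncard_insert_of_notMem (by
        simp only [Set.mem_insert_iff, Set.mem_singleton_iff]; push_neg
        exact ⟨N (by decide), N (by decide), N (by decide)⟩),
      Set.ncard_insert_of_notMem (by
        simp only [Set.mem_insert_iff, Set.mem_singleton_iff]; push_neg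
        exact ⟨N (by decide), N (by decide)⟩),
      Set.ncard_insert_of_notMem (by
        simp only [Set.mem_singleton_iff]
        exact N (by decide)),
      Set.ncard_singleton]


/-- Every hyperedge of `H_{4,n}` induces a complete subgraph on its `4` vertices
(`6` edges) in the graph on `Δ_{4,n}` with edges `{xy : ‖x−y‖₁ = 2/n}`, and the
edge sets induced by distinct hyperedges are pairwise disjoint. -/
theorem stmt9 (n : ℕ) (hn : 1 ≤ n) :
    (∀ e ∈ hyperedges 4 n, e.ncard = 4 ∧
      (∀ x ∈ e, ∀ y ∈ e, x ≠ y → (∑ i, |x i - y i|) = 2 / n) ∧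
      (inducedPairs e).ncard = 6) ∧
    ∀ e₁ ∈ hyperedges 4 n, ∀ e₂ ∈ hyperedges 4 n, e₁ ≠ e₂ →
      Disjoint (inducedPairs e₁) (inducedPairs e₂) := by
  have hn0 : (n:ℚ) ≠ 0 := Nat.cast_ne_zero.mpr (by omega)
  constructor
  · rintro e ⟨z, -, rfl⟩
    rw [hyperedge_eq]
    have hv := vtx_inj hn0 z
    refine ⟨?_, ?_, ?_⟩
    · calc (Set.range (vtx n z)).ncard
          = Nat.card (Set.range (vtx n z)) := (Nat.card_coe_set_eq _).symm
        _ = Nat.card (Fin 4) := Nat.card_range_of_injective hv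
        _ = 4 := by simp
    · rintro x ⟨i, rfl⟩ y ⟨j, rfl⟩ hxy
      exact vtx_dist hn z (fun h => hxy (by rw [h]))
    · rw [inducedPairs_range _ hv]; exact ncard_pairs _ hv
  · rintro e₁ ⟨z₁, -, rfl⟩ e₂ ⟨z₂, -, rfl⟩ hne
    rw [Set.disjoint_left]
    rintro p ⟨x, y, hx, hy, hxy, rfl⟩ ⟨x', y', hx', hy', -, hpp⟩
    rw [hyperedge_eq] at hx hy
    rw [hyperedge_eq] at hx' hy'
    have hx2 : x ∈ Set.range (vtx n z₂) := by
      have hm : x ∈ ({x', y'} : Set (Fin 4 → ℚ)) := by rw [← hpp]; simp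
      simp only [Set.mem_insert_iff, Set.mem_singleton_iff] at hm
      rcases hm with rfl | rfl
      exacts [hx', hy']
    have hy2 : y ∈ Set.range (vtx n z₂) := by
      have hm : y ∈ ({x', y'} : Set (Fin 4 → ℚ)) := by rw [← hpp]; simp
      simp only [Set.mem_insert_iff, Set.mem_singleton_iff] at hm
      rcases hm with rfl | rfl
      exacts [hx', hy']
    obtain ⟨i, hi⟩ := hx
    obtain ⟨j, hj⟩ := hy
    obtain ⟨k, hk⟩ := hx2
    obtain ⟨l, hl⟩ := hy2
    have hij : i ≠ j := fun h => hxy (by rw [← hi, ← hj, h])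
    have E1 : ∀ m, vtx n z₁ i m = vtx n z₂ k m := fun m => by
      rw [hi, hk]
    have E2 : ∀ m, vtx n z₁ j m = vtx n z₂ l m := fun m => by
      rw [hj, hl]
    have key : ∀ m, stdVec 4 i m - stdVec 4 j m = stdVec 4 k m - stdVec 4 l m := by
      intro m
      have e1 := E1 m; have e2 := E2 m
      simp only [vtx] at e1 e2
      refine mul_left_cancel₀ (one_div_ne_zero hn0) ?_
      ring_nf
      ring_nf at e1 e2
      linarith
    have hik : i = k := by
      have h1 := key i
      simp only [stdVec, if_pos rfl, if_neg hij] at h1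
      by_contra hne2
      rw [if_neg hne2] at h1
      split_ifs at h1 <;> norm_num at h1
    have hz : ∀ m, (((n:ℚ)-1)/n) * z₁ m = (((n:ℚ)-1)/n) * z₂ m := by
      intro m
      have e1 := E1 m
      rw [← hik] at e1
      simp only [vtx] at e1
      linarith
    apply hne
    ext w
    simp only [hyperedge, Set.mem_setOf_eq]
    constructor <;> rintro ⟨i0, rfl⟩ <;> refine ⟨i0, ?_⟩ <;> funext m
    · rw [hz m]
    · rw [hz m]
end

section
/- For every c with 0 < c < 1/9 and all λ₁, λ₂, λ₃, λ₄ ≥ 0 with λ₁ + λ₂ + λ₃ + λ₄ = 1, we have min(1.2λ₁ + λ₂ + 1.5λ₄, 1.2λ₁ + 2λ₂ + (6/(9c))λ₃, 1.2λ₁ + 2λ₂ + (9c²/2)λ₄) ≤ 1.20067. -/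
/-- The cubic `g(c) = 0.001675 - 0.903015 c² + 8.1045225 c³` is nonnegative on `(0, 1/9)`. -/
lemma stmt15_aux (c : ℝ) (hc1 : 0 < c) (hc2 : c < 1 / 9) :
    (0:ℝ) ≤ 0.001675 - 0.903015 * c ^ 2 + 8.1045225 * c ^ 3 := by
  nlinarith [mul_nonneg (sq_nonneg (c - 0.0742808)) hc1.le,
    sq_nonneg (c - 0.0742808), hc1, hc2, sq_nonneg c]

/-- For `0 < c < 1/9` and nonnegative `λ₁, λ₂, λ₃, λ₄` summing to `1`, the minimum
of the three cut costs is at most `1.20067`. -/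
theorem stmt15 (c : ℝ) (hc1 : 0 < c) (hc2 : c < 1 / 9)
    (l1 l2 l3 l4 : ℝ) (h1 : 0 ≤ l1) (h2 : 0 ≤ l2) (h3 : 0 ≤ l3) (h4 : 0 ≤ l4)
    (hsum : l1 + l2 + l3 + l4 = 1) :
    min (min (1.2 * l1 + l2 + 1.5 * l4) (1.2 * l1 + 2 * l2 + (6 / (9 * c)) * l3))
        (1.2 * l1 + 2 * l2 + (9 * c ^ 2 / 2) * l4) ≤ 1.20067 := by
  set a := min (min (1.2 * l1 + l2 + 1.5 * l4) (1.2 * l1 + 2 * l2 + (6 / (9 * c)) * l3))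
        (1.2 * l1 + 2 * l2 + (9 * c ^ 2 / 2) * l4) with ha
  have hA1 : a ≤ 1.2 * l1 + l2 + 1.5 * l4 := le_trans (min_le_left _ _) (min_le_left _ _)
  have hA2 : a ≤ 1.2 * l1 + 2 * l2 + (6 / (9 * c)) * l3 :=
    le_trans (min_le_left _ _) (min_le_right _ _)
  have hA3 : a ≤ 1.2 * l1 + 2 * l2 + (9 * c ^ 2 / 2) * l4 := min_le_right _ _
  have hc0 : c ≠ 0 := ne_of_gt hc1
  -- multiply the second inequality by c to clear the denominator
  have hA2c : c * a ≤ 1.2 * c * l1 + 2 * c * l2 + (2/3) * l3 := by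
    have h := mul_le_mul_of_nonneg_left hA2 hc1.le
    have hkey : c * ((6 / (9 * c)) * l3) = (2/3) * l3 := by
      field_simp
      ring
    calc c * a ≤ c * (1.2 * l1 + 2 * l2 + (6 / (9 * c)) * l3) := h
      _ = 1.2 * c * l1 + 2 * c * l2 + c * ((6 / (9 * c)) * l3) := by ring
      _ = 1.2 * c * l1 + 2 * c * l2 + (2/3) * l3 := by rw [hkey]
  -- weights
  have hw3 : (0:ℝ) ≤ 0.20067 - 1.801005 * c := by linarith
  have H1 : 0.79933 * a ≤ 0.79933 * (1.2 * l1 + l2 + 1.5 * l4) := by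
    have : (0:ℝ) ≤ 0.79933 := by norm_num
    exact mul_le_mul_of_nonneg_left hA1 this
  have H2 : 1.801005 * (c * a) ≤ 1.801005 * (1.2 * c * l1 + 2 * c * l2 + (2/3) * l3) := by
    have : (0:ℝ) ≤ 1.801005 := by norm_num
    exact mul_le_mul_of_nonneg_left hA2c this
  have H3 : (0.20067 - 1.801005 * c) * a ≤
      (0.20067 - 1.801005 * c) * (1.2 * l1 + 2 * l2 + (9 * c ^ 2 / 2) * l4) :=
    mul_le_mul_of_nonneg_left hA3 hw3
  have hg : (0:ℝ) ≤ 0.001675 - 0.903015 * c ^ 2 + 8.1045225 * c ^ 3 := stmt15_aux c hc1 hc2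
  have hK : (0.001675 - 0.903015 * c ^ 2 + 8.1045225 * c ^ 3) * l4 ≥ 0 := mul_nonneg hg h4
  nlinarith [H1, H2, H3, hK, h1, hsum]
end
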